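/- Let c(t) = Σ_{n≥0} Cₙ tⁿ be the generating function of the Catalan numbers as a formal power series over ℚ. Define Hₙ (n ≥ 1) by log(c(t)) = Σ_{n≥1} Hₙ tⁿ, i.e. the formal logarithm of c(t) (which has constant term 1). Then Hₙ = (2n-1)!/(n!)² for all n ≥ 1. -/

import Mathlib

open Nat PowerSeries Finset

noncomputable def Bcb : PowerSeries ℚ := PowerSeries.mk fun n => (Nat.centralBinom n : ℚ)

lemma central_conv (n : ℕ) :
    (∑ j ∈ range (n + 1), (Nat.centralBinom j : ℚ) * Nat.centralBinom (n - j)) = 4 ^ n := by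
  induction n with
  | zero => simp [Nat.centralBinom]
  | succ n ih =>
    set b : ℕ → ℚ := fun j => (Nat.centralBinom j : ℚ) with hb
    -- weighted sum
    have hsym : ∀ N : ℕ, (∑ j ∈ range (N + 1), (j : ℚ) * b j * b (N - j))
        = (∑ j ∈ range (N + 1), ((N - j : ℕ) : ℚ) * b (N - j) * b j) := by
      intro N
      rw [← Finset.sum_range_reflect]
      apply Finset.sum_congr rfl
      intro j hj
      simp only [Finset.mem_range] at hj
      have h1 : N + 1 - 1 - j = N - j := by omega
      have h2 : N - (N - j) = j := by omega
      rw [h1, h2]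
    have hdouble : ∀ N : ℕ, 2 * (∑ j ∈ range (N + 1), (j : ℚ) * b j * b (N - j))
        = (N : ℚ) * ∑ j ∈ range (N + 1), b j * b (N - j) := by
      intro N
      have := hsym N
      rw [two_mul]
      nth_rewrite 2 [this]
      rw [← Finset.sum_add_distrib, Finset.mul_sum]
      apply Finset.sum_congr rfl
      intro j hj
      simp only [Finset.mem_range] at hj
      have : ((N - j : ℕ) : ℚ) = (N : ℚ) - j := by
        have : j ≤ N := by omega
        push_cast [this]; ring
      rw [this]; ring
    -- recurrence for b
    have hrec : ∀ j : ℕ, ((j : ℚ) + 1) * b (j + 1) = 2 * (2 * j + 1) * b j := by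
      intro j
      have := Nat.succ_mul_centralBinom_succ j
      have : ((j + 1) * Nat.centralBinom (j + 1) : ℚ) = (2 * (2 * j + 1) * Nat.centralBinom j : ℚ) := by
        exact_mod_cast congrArg (Nat.cast : ℕ → ℚ) this
      push_cast at this
      simpa [hb] using this
    -- compute weighted sum at N = n+1 via shift
    have hshift : (∑ j ∈ range (n + 2), (j : ℚ) * b j * b (n + 1 - j))
        = ∑ i ∈ range (n + 1), ((i : ℚ) + 1) * b (i + 1) * b (n - i) := by
      rw [Finset.sum_range_succ'] -- splits off j = 0
      simp only [Nat.cast_zero, zero_mul]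
      rw [add_zero]
      apply Finset.sum_congr rfl
      intro i hi
      simp only [Finset.mem_range] at hi
      have : n + 1 - (i + 1) = n - i := by omega
      rw [this]; push_cast; ring
    have hstep : (∑ j ∈ range (n + 2), (j : ℚ) * b j * b (n + 1 - j))
        = (2 * n + 2) * ∑ j ∈ range (n + 1), b j * b (n - j) := by
      rw [hshift]
      have : ∀ i ∈ range (n + 1), ((i : ℚ) + 1) * b (i + 1) * b (n - i)
          = 2 * ((2 * i + 1) : ℚ) * (b i * b (n - i)) := by
        intro i _
        rw [show ((i : ℚ) + 1) * b (i + 1) * b (n - i) = (((i : ℚ) + 1) * b (i + 1)) * b (n - i) by ring,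
          hrec i]; ring
      rw [Finset.sum_congr rfl this]
      have e1 : ∑ i ∈ range (n + 1), 2 * ((2 * i + 1) : ℚ) * (b i * b (n - i))
          = 4 * (∑ i ∈ range (n + 1), (i : ℚ) * b i * b (n - i))
            + 2 * ∑ i ∈ range (n + 1), b i * b (n - i) := by
        rw [Finset.mul_sum, Finset.mul_sum, ← Finset.sum_add_distrib]
        apply Finset.sum_congr rfl; intro i _; ring
      rw [e1, show (4 : ℚ) * (∑ i ∈ range (n + 1), (i : ℚ) * b i * b (n - i))
          = 2 * (2 * (∑ i ∈ range (n + 1), (i : ℚ) * b i * b (n - i))) by ring, hdouble n]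
      ring
    -- combine: (n+1) * T_{n+1} = 2 * (2n+2) * T_n
    have hfin : ((n : ℚ) + 1) * (∑ j ∈ range (n + 2), b j * b (n + 1 - j))
        = 2 * (2 * n + 2) * ∑ j ∈ range (n + 1), b j * b (n - j) := by
      have h2 := hdouble (n + 1)
      push_cast at h2
      rw [show (2 : ℚ) * (2 * n + 2) * ∑ j ∈ range (n + 1), b j * b (n - j)
          = 2 * ((2 * n + 2) * ∑ j ∈ range (n + 1), b j * b (n - j)) by ring, ← hstep]
      linarith [h2]
    have hne : ((n : ℚ) + 1) ≠ 0 := by positivity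
    rw [ih] at hfin
    have h4 : (∑ j ∈ range (n + 2), b j * b (n + 1 - j))
        = 2 * (2 * n + 2) * 4 ^ n / ((n : ℚ) + 1) := by
      field_simp at hfin ⊢
      linarith [hfin]
    rw [h4]
    field_simp
    ring


lemma coeff_Bcb_sq (n : ℕ) : PowerSeries.coeff n (Bcb ^ 2) = 4 ^ n := by
  rw [sq, PowerSeries.coeff_mul]
  rw [Finset.Nat.sum_antidiagonal_eq_sum_range_succ
    (fun i j => (PowerSeries.coeff i Bcb) * (PowerSeries.coeff j Bcb))]
  simpa [Bcb] using central_conv n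

lemma Bcb_sq : (1 - 4 * X) * Bcb ^ 2 = 1 := by
  have h : Bcb ^ 2 - 4 * (X * Bcb ^ 2) = 1 := by
    ext n
    cases n with
    | zero =>
      rw [map_sub, coeff_Bcb_sq]
      simp [PowerSeries.coeff_zero_eq_constantCoeff, map_mul]
    | succ n =>
      rw [map_sub, coeff_Bcb_sq]
      have h4 : (4 : ℚ⟦X⟧) * (X * Bcb ^ 2) = X * (4 * Bcb ^ 2) := by ring
      rw [h4, PowerSeries.coeff_succ_X_mul]
      have : (4 : ℚ⟦X⟧) * Bcb ^ 2 = Bcb ^ 2 + Bcb ^ 2 + Bcb ^ 2 + Bcb ^ 2 := by ring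
      rw [this]
      simp [coeff_Bcb_sq, PowerSeries.coeff_one]
      ring
  linear_combination h

lemma constantCoeff_Bcb : PowerSeries.constantCoeff Bcb = 1 := by
  simp [Bcb, Nat.centralBinom]

lemma quad_eq (C : ℕ → ℚ) (hCc : ∀ n : ℕ, C n = (catalan n : ℚ))
    (c : PowerSeries ℚ) (hc : c = PowerSeries.mk C) : c = 1 + X * c ^ 2 := by
  subst hc
  ext n
  cases n with
  | zero =>
    simp [PowerSeries.coeff_zero_eq_constantCoeff, map_mul, hCc]
  | succ n =>
    rw [map_add, PowerSeries.coeff_succ_X_mul, sq, PowerSeries.coeff_mul]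
    have h1 : PowerSeries.coeff (n + 1) (1 : ℚ⟦X⟧) = 0 := by
      simp [PowerSeries.coeff_one]
    rw [h1, zero_add]
    simp only [PowerSeries.coeff_mk]
    rw [hCc, catalan_succ']
    push_cast
    apply Finset.sum_congr rfl
    intro ij _
    simp [hCc]

lemma cat_formula (n : ℕ) : ((2 * n)! : ℚ) / ((n ! : ℚ) * ((n + 1)! : ℚ)) = (catalan n : ℚ) := by
  have h1 : (n + 1) * catalan n = (2 * n).choose n := succ_mul_catalan_eq_centralBinom n
  have h2 : (2 * n).choose n * n ! * n ! = (2 * n)! := by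
    have := Nat.choose_mul_factorial_mul_factorial (show n ≤ 2 * n by omega)
    simpa [show 2 * n - n = n by omega] using this
  have h3 : (2 * n)! = (n + 1) * catalan n * n ! * n ! := by rw [h1, h2]
  have hne : ((n ! : ℚ) * ((n + 1)! : ℚ)) ≠ 0 := by positivity
  rw [div_eq_iff hne]
  rw [Nat.factorial_succ]
  push_cast [h3]
  ring



open Nat PowerSeries in
/-- the coefficients Hₙ of the formal logarithm of the Catalan
generating function c(t) are Hₙ = (2n-1)!/(n!)². The formal logarithm of
c = 1 + f (with f of zero constant term) is Σ_{k≥1} (-1)^{k+1} f^k/k, and its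
n-th coefficient only involves k ≤ n. -/
theorem log_catalan_generating_function
    (C : ℕ → ℚ) (hC : ∀ n : ℕ, C n = ((2 * n)! : ℚ) / ((n ! : ℚ) * ((n + 1)! : ℚ)))
    (c : PowerSeries ℚ) (hc : c = PowerSeries.mk C)
    (H : ℕ → ℚ) (hH : ∀ n : ℕ, 1 ≤ n → H n = ((2 * n - 1)! : ℚ) / ((n ! : ℚ) ^ 2)) :
    ∀ n : ℕ, 1 ≤ n →
      (∑ k ∈ Finset.Icc 1 n,
        (-1 : ℚ) ^ (k + 1) * (PowerSeries.coeff n ((c - 1) ^ k)) / k) = H n := by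
  have hCc : ∀ n : ℕ, C n = (catalan n : ℚ) := fun n => by rw [hC, cat_formula]
  have hquad : c = 1 + X * c ^ 2 := quad_eq C hCc c hc
  have hxc : X * c ^ 2 = c - 1 := by linear_combination -hquad
  set B := Bcb with hB
  -- s = 1 - 2Xc, s^2 = 1 - 4X
  have hs2 : (1 - 2 * X * c) ^ 2 = 1 - 4 * X := by linear_combination (4 * X) * hxc
  have hsB : (1 - 2 * X * c) * B = 1 := by
    have hsq : ((1 - 2 * X * c) * B) * ((1 - 2 * X * c) * B) = 1 := by
      have : ((1 - 2 * X * c) * B) * ((1 - 2 * X * c) * B) = (1 - 2 * X * c) ^ 2 * B ^ 2 := by ring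
      rw [this, hs2, Bcb_sq]
    rcases mul_self_eq_one_iff.mp hsq with h | h
    · exact h
    · exfalso
      have h0 := congrArg (PowerSeries.constantCoeff) h
      simp [map_mul, map_sub, map_one] at h0
      rw [hB, constantCoeff_Bcb] at h0
      norm_num at h0
  -- derivative relation
  have hder : (d⁄dX ℚ) c = c ^ 2 + X * (2 * c * ((d⁄dX ℚ) c)) := by
    nth_rewrite 1 [hquad]
    rw [map_add, Derivation.map_one_eq_zero, zero_add, Derivation.leibniz,
      Derivation.leibniz_pow, derivative_X]
    simp only [smul_eq_mul, nsmul_eq_mul, pow_one, Nat.cast_ofNat]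
    ring
  have hds : (d⁄dX ℚ) c * (1 - 2 * X * c) = c ^ 2 := by linear_combination hder
  have hdB : (d⁄dX ℚ) c = c ^ 2 * B := by
    calc (d⁄dX ℚ) c = (d⁄dX ℚ) c * ((1 - 2 * X * c) * B) := by rw [hsB, mul_one]
    _ = ((d⁄dX ℚ) c * (1 - 2 * X * c)) * B := by ring
    _ = c ^ 2 * B := by rw [hds]
  -- coefficients of c * B
  have hcB : ∀ k : ℕ, PowerSeries.coeff k (c * B) = (Nat.centralBinom (k + 1) : ℚ) / 2 := by
    intro k
    have h2 : X * (c * B) + X * (c * B) = B - 1 := by linear_combination -hsB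
    have h3 := congrArg (PowerSeries.coeff (k + 1)) h2
    rw [map_add, PowerSeries.coeff_succ_X_mul, map_sub] at h3
    have hB1 : PowerSeries.coeff (k + 1) B = (Nat.centralBinom (k + 1) : ℚ) := by
      simp [hB, Bcb]
    have h11 : PowerSeries.coeff (k + 1) (1 : ℚ⟦X⟧) = 0 := by simp [PowerSeries.coeff_one]
    rw [hB1, h11] at h3
    linarith [h3]
  intro n hn
  obtain ⟨m, rfl⟩ : ∃ m, n = m + 1 := ⟨n - 1, by omega⟩
  set f : ℚ⟦X⟧ := c - 1 with hf
  -- order vanishing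
  have hord : ∀ g : ℚ⟦X⟧, PowerSeries.coeff m (g * f ^ (m + 1)) = 0 := by
    intro g
    have hfx : f = X * c ^ 2 := by rw [hf, hxc]
    have he : g * f ^ (m + 1) = (g * (c ^ 2) ^ (m + 1)) * X ^ (m + 1) := by
      rw [hfx, mul_pow]; ring
    rw [he, PowerSeries.coeff_mul_X_pow']
    simp
  -- sign extraction
  have hneg : ∀ (g : ℚ⟦X⟧) (j : ℕ), PowerSeries.coeff m (g * (-f) ^ j)
      = (-1 : ℚ) ^ j * PowerSeries.coeff m (g * f ^ j) := by
    intro g j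
    have h1 : g * (-f) ^ j = (PowerSeries.C ((-1 : ℚ) ^ j)) * (g * f ^ j) := by
      rw [neg_pow]
      rw [map_pow, map_neg, map_one]
      ring
    rw [h1, PowerSeries.coeff_C_mul]
  -- term identity
  have hterm : ∀ j : ℕ, ((m : ℚ) + 1) * ((-1 : ℚ) ^ (1 + j + 1)
        * (PowerSeries.coeff (m + 1) (f ^ (1 + j))) / ((1 + j : ℕ) : ℚ))
      = PowerSeries.coeff m ((d⁄dX ℚ) c * (-f) ^ j) := by
    intro j
    have hdf : (d⁄dX ℚ) f = (d⁄dX ℚ) c := by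
      rw [hf, map_sub, Derivation.map_one_eq_zero, sub_zero]
    have hpow : (d⁄dX ℚ) (f ^ (j + 1)) = ((j : ℚ) + 1) • (f ^ j * (d⁄dX ℚ) c) := by
      rw [Derivation.leibniz_pow, hdf]
      simp only [smul_eq_mul, nsmul_eq_mul, Nat.add_sub_cancel,
        PowerSeries.smul_eq_C_mul, map_add, map_one, map_natCast]
      push_cast
      ring
    have hco := congrArg (PowerSeries.coeff m) hpow
    rw [coeff_derivative, map_smul, smul_eq_mul] at hco
    have hsign : (-1 : ℚ) ^ (1 + j + 1) = (-1 : ℚ) ^ j := by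
      rw [show 1 + j + 1 = j + 2 by ring, pow_add]
      norm_num
    rw [hneg ((d⁄dX ℚ) c) j, hsign, show 1 + j = j + 1 by ring]
    have hmul : PowerSeries.coeff m ((d⁄dX ℚ) c * f ^ j)
        = PowerSeries.coeff m (f ^ j * (d⁄dX ℚ) c) := by rw [mul_comm]
    rw [hmul]
    have hjne : ((j : ℚ) + 1) ≠ 0 := by positivity
    push_cast
    field_simp
    linear_combination hco
  -- sum over j
  set P : ℚ⟦X⟧ := ∑ j ∈ range (m + 1), (-f) ^ j with hP
  have hIcc : (∑ k ∈ Finset.Icc 1 (m + 1),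
        (-1 : ℚ) ^ (k + 1) * (PowerSeries.coeff (m + 1) ((c - 1) ^ k)) / (k : ℚ))
      = ∑ j ∈ range (m + 1),
        (-1 : ℚ) ^ (1 + j + 1) * (PowerSeries.coeff (m + 1) (f ^ (1 + j))) / ((1 + j : ℕ) : ℚ) := by
    rw [← Finset.Ico_add_one_right_eq_Icc, Finset.sum_Ico_eq_sum_range]
    simp only [Nat.add_sub_cancel, hf]
  have hsum : ((m : ℚ) + 1) * (∑ k ∈ Finset.Icc 1 (m + 1),
        (-1 : ℚ) ^ (k + 1) * (PowerSeries.coeff (m + 1) ((c - 1) ^ k)) / (k : ℚ))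
      = PowerSeries.coeff m ((d⁄dX ℚ) c * P) := by
    rw [hIcc, Finset.mul_sum]
    rw [hP, Finset.mul_sum, map_sum]
    exact Finset.sum_congr rfl fun j _ => hterm j
  -- geometric series
  have hgeom : c * P = 1 - (-f) ^ (m + 1) := by
    have hg := geom_sum_mul (-f) (m + 1)
    rw [← hP] at hg
    linear_combination -hg
  have hdP : (d⁄dX ℚ) c * P = c * B - (c * B) * (-f) ^ (m + 1) := by
    calc (d⁄dX ℚ) c * P = (c * B) * (c * P) := by rw [hdB]; ring
    _ = (c * B) * (1 - (-f) ^ (m + 1)) := by rw [hgeom]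
    _ = c * B - (c * B) * (-f) ^ (m + 1) := by ring
  have hval : PowerSeries.coeff m ((d⁄dX ℚ) c * P) = (Nat.centralBinom (m + 1) : ℚ) / 2 := by
    rw [hdP, map_sub, hcB m, hneg (c * B) (m + 1), hord (c * B)]
    ring
  -- conclude
  rw [hval] at hsum
  have hmne : ((m : ℚ) + 1) ≠ 0 := by positivity
  have hS : (∑ k ∈ Finset.Icc 1 (m + 1),
        (-1 : ℚ) ^ (k + 1) * (PowerSeries.coeff (m + 1) ((c - 1) ^ k)) / (k : ℚ))
      = (Nat.centralBinom (m + 1) : ℚ) / (2 * ((m : ℚ) + 1)) := by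
    field_simp at hsum ⊢
    linarith [hsum]
  rw [hS, hH (m + 1) (by omega)]
  -- numeric identity
  have hcb : (Nat.centralBinom (m + 1) : ℚ)
      = ((2 * (m + 1))! : ℚ) / (((m + 1)! : ℚ) * ((m + 1)! : ℚ)) := by
    rw [Nat.centralBinom]
    rw [Nat.cast_choose ℚ (show m + 1 ≤ 2 * (m + 1) by omega),
      show 2 * (m + 1) - (m + 1) = m + 1 by omega]
  rw [hcb]
  have h2m : (2 * (m + 1) - 1) = 2 * m + 1 := by omega
  have hfac : ((2 * (m + 1))! : ℚ) = (2 * (m + 1) : ℕ) * ((2 * m + 1)! : ℚ) := by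
    rw [show 2 * (m + 1) = (2 * m + 1) + 1 by omega, Nat.factorial_succ]
    push_cast
    ring
  rw [h2m, hfac]
  have hne1 : ((m + 1)! : ℚ) ≠ 0 := by positivity
  field_simp
  ring
  push_cast
  ring
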